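/- If the alphabet has more than two characters, then for any string S and pattern P, the minimum size of an eliminating set for P in S equals the minimum size of a hitting set for the collection of intervals of P-matches in S. -/

import Mathlib

/-- Substituting the characters of `S` at the positions of `E` according to `c`. -/
def substitute {α : Type*} (S : List α) (E : Finset ℕ) (c : ℕ → α) : List α :=
  S.mapIdx (fun i a => if i ∈ E then c i else a)

namespace MinElim

variable {α : Type*}

lemma substitute_getElem? (S : List α) (E : Finset ℕ) (c : ℕ → α) (x : ℕ) :
    (substitute S E c)[x]? = (S[x]?).map (fun a => if x ∈ E then c x else a) := by
  unfold substitute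
  rw [List.mapIdx_eq_ofFn, List.getElem?_ofFn]
  by_cases hx : x < S.length
  · simp [List.ofFnNthVal, hx, List.getElem?_eq_getElem hx]
  · simp [List.ofFnNthVal, hx, List.getElem?_eq_none (Nat.le_of_not_lt hx)]

lemma occ_iff (P T : List α) (i : ℕ) :
    P <+: T.drop i ↔ ∀ d < P.length, T[i + d]? = P[d]? := by
  constructor
  · rintro ⟨t, ht⟩ d hd
    rw [← List.getElem?_drop, ← ht, List.getElem?_append, if_pos hd]
  · intro hx
    have : P = (T.drop i).take P.length := by
      apply List.ext_getElem?
      intro m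
      rw [List.getElem?_take]
      by_cases hm : m < P.length
      · rw [if_pos hm, List.getElem?_drop, hx m hm]
      · rw [if_neg hm, List.getElem?_eq_none (Nat.le_of_not_lt hm)]
    exact List.prefix_iff_eq_take.mpr this

/-- Offset `d` is "bad" for position `j`: the window starting at `j - d` matches `P`
at every position other than `j`, and `j` is the largest element of `E` in the window. -/
def isBad (S P : List α) (E : Finset ℕ) (c : ℕ → α) (j d : ℕ) : Prop :=
  d < P.length ∧ d ≤ j ∧
  (∀ x ∈ E, j - d ≤ x → x < j - d + P.length → x ≤ j) ∧
  (∀ x, j - d ≤ x → x < j - d + P.length → x ≠ j →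
    (substitute S E c)[x]? = P[x - (j - d)]?)

lemma triple (S P : List α) (E : Finset ℕ) (c : ℕ → α) {j d1 d2 d3 : ℕ}
    (h1 : isBad S P E c j d1) (h2 : isBad S P E c j d2) (h3 : isBad S P E c j d3)
    (h12 : d1 < d2) (h23 : d2 < d3) : P[d3]? = P[d1]? := by
  obtain ⟨hk1, hj1, _, hw1⟩ := h1
  obtain ⟨hk2, hj2, _, hw2⟩ := h2
  obtain ⟨hk3, hj3, _, hw3⟩ := h3
  -- first position: x = j - (d2 - d1)
  have e1 : P[d1]? = P[d1 + (d3 - d2)]? := by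
    have u2 := hw2 (j - (d2 - d1)) (by omega) (by omega) (by omega)
    have u3 := hw3 (j - (d2 - d1)) (by omega) (by omega) (by omega)
    have q2 : j - (d2 - d1) - (j - d2) = d1 := by omega
    have q3 : j - (d2 - d1) - (j - d3) = d1 + (d3 - d2) := by omega
    rw [q2] at u2; rw [q3] at u3
    rw [← u2, u3]
  -- second position: x = j + (d3 - d2)
  have e2 : P[d3]? = P[d1 + (d3 - d2)]? := by
    have u1 := hw1 (j + (d3 - d2)) (by omega) (by omega) (by omega)
    have u2 := hw2 (j + (d3 - d2)) (by omega) (by omega) (by omega)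
    have q1 : j + (d3 - d2) - (j - d1) = d1 + (d3 - d2) := by omega
    have q2 : j + (d3 - d2) - (j - d2) = d3 := by omega
    rw [q1] at u1; rw [q2] at u2
    rw [← u2, u1]
  rw [e2, ← e1]

lemma exists_good [Fintype α] (hcard : 2 < Fintype.card α)
    (S P : List α) (E : Finset ℕ) (c : ℕ → α) (j : ℕ) :
    ∃ a : α, ∀ d, isBad S P E c j d → P[d]? ≠ some a := by
  by_contra hcon
  push_neg at hcon
  obtain ⟨a, b, c', hab, hac, hbc⟩ := Fintype.two_lt_card_iff.mp hcard
  obtain ⟨da, hba, hva⟩ := hcon a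
  obtain ⟨db, hbb, hvb⟩ := hcon b
  obtain ⟨dc, hbc', hvc⟩ := hcon c'
  have hne1 : da ≠ db := by
    intro e
    have : some a = some b := by rw [← hva, e, hvb]
    exact hab (Option.some_inj.mp this)
  have hne2 : da ≠ dc := by
    intro e
    have : some a = some c' := by rw [← hva, e, hvc]
    exact hac (Option.some_inj.mp this)
  have hne3 : db ≠ dc := by
    intro e
    have : some b = some c' := by rw [← hvb, e, hvc]
    exact hbc (Option.some_inj.mp this)
  -- any ordering of the three distinct offsets yields a contradiction
  have key : ∀ e1 e2 e3 : ℕ, isBad S P E c j e1 → isBad S P E c j e2 →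
      isBad S P E c j e3 → e1 < e2 → e2 < e3 → P[e3]? = P[e1]? :=
    fun _ _ _ x1 x2 x3 o1 o2 => triple S P E c x1 x2 x3 o1 o2
  rcases Nat.lt_trichotomy da db with o1 | o1 | o1
  · rcases Nat.lt_trichotomy db dc with o2 | o2 | o2
    · have := key da db dc hba hbb hbc' o1 o2
      rw [hva, hvc] at this; exact hac (Option.some_inj.mp this).symm
    · exact hne3 o2
    · rcases Nat.lt_trichotomy da dc with o3 | o3 | o3
      · have := key da dc db hba hbc' hbb o3 o2
        rw [hva, hvb] at this; exact hab (Option.some_inj.mp this).symm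
      · exact hne2 o3
      · have := key dc da db hbc' hba hbb o3 o1
        rw [hvc, hvb] at this; exact hbc (Option.some_inj.mp this)
  · exact hne1 o1
  · rcases Nat.lt_trichotomy da dc with o2 | o2 | o2
    · have := key db da dc hbb hba hbc' o1 o2
      rw [hvb, hvc] at this; exact hbc (Option.some_inj.mp this).symm
    · exact hne2 o2
    · rcases Nat.lt_trichotomy db dc with o3 | o3 | o3
      · have := key db dc da hbb hbc' hba o3 o2
        rw [hvb, hva] at this; exact hab (Option.some_inj.mp this)
      · exact hne3 o3
      · have := key dc db da hbc' hbb hba o3 o1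
        rw [hvc, hva] at this; exact hac (Option.some_inj.mp this)

lemma isBad_congr (S P : List α) (E : Finset ℕ) {c c' : ℕ → α} {j d : ℕ}
    (hagree : ∀ m, m < j → c m = c' m)
    (hb : isBad S P E c j d) : isBad S P E c' j d := by
  obtain ⟨h1, h2, h3, hw⟩ := hb
  refine ⟨h1, h2, h3, fun x hx1 hx2 hxj => ?_⟩
  have heq : (substitute S E c')[x]? = (substitute S E c)[x]? := by
    rw [substitute_getElem?, substitute_getElem?]
    by_cases hxE : x ∈ E
    · have hxlt : x < j := lt_of_le_of_ne (h3 x hxE hx1 hx2) hxj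
      rw [hagree x hxlt]
    · simp [hxE]
  rw [heq]
  exact hw x hx1 hx2 hxj

open Classical in
/-- A character for position `j` avoiding all bad characters (if one exists). -/
noncomputable def pickc (S P : List α) (E : Finset ℕ) (c : ℕ → α) (j : ℕ) (a0 : α) : α :=
  if h : ∃ a : α, ∀ d, isBad S P E c j d → P[d]? ≠ some a then h.choose else a0

lemma pickc_spec (S P : List α) (E : Finset ℕ) (c : ℕ → α) (j : ℕ) (a0 : α)
    (hex : ∃ a : α, ∀ d, isBad S P E c j d → P[d]? ≠ some a) :
    ∀ d, isBad S P E c j d → P[d]? ≠ some (pickc S P E c j a0) := by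
  rw [pickc, dif_pos hex]
  exact hex.choose_spec

/-- Stage-by-stage construction of the substitution characters. -/
noncomputable def gfun (S P : List α) (E : Finset ℕ) (a0 : α) : ℕ → ℕ → α
  | 0 => fun _ => a0
  | (j + 1) => fun m =>
      if m = j then pickc S P E (gfun S P E a0 j) j a0 else gfun S P E a0 j m

noncomputable def cfun (S P : List α) (E : Finset ℕ) (a0 : α) : ℕ → α :=
  fun j => gfun S P E a0 (j + 1) j

lemma gfun_coh (S P : List α) (E : Finset ℕ) (a0 : α) :
    ∀ j m, m < j → gfun S P E a0 j m = cfun S P E a0 m := by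
  intro j
  induction j with
  | zero => intro m hm; omega
  | succ j ih =>
    intro m hm
    by_cases hmj : m = j
    · subst hmj; rfl
    · have hm' : m < j := by omega
      show (if m = j then _ else gfun S P E a0 j m) = _
      rw [if_neg hmj]
      exact ih m hm'

lemma cfun_good [Fintype α] (hcard : 2 < Fintype.card α)
    (S P : List α) (E : Finset ℕ) (a0 : α) :
    ∀ j d, isBad S P E (cfun S P E a0) j d → P[d]? ≠ some (cfun S P E a0 j) := by
  intro j d hbad
  have hb' : isBad S P E (gfun S P E a0 j) j d :=
    isBad_congr S P E (fun m hm => (gfun_coh S P E a0 j m hm).symm) hbad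
  have hc : cfun S P E a0 j = pickc S P E (gfun S P E a0 j) j a0 := by
    show (if j = j then _ else _) = _
    rw [if_pos rfl]
  rw [hc]
  exact pickc_spec S P E (gfun S P E a0 j) j a0
    (exists_good hcard S P E (gfun S P E a0 j) j) d hb'

lemma no_occ (S P : List α) (H : Finset ℕ)
    (Hhit : ∀ i, P <+: S.drop i → ∃ j ∈ H, i ≤ j ∧ j < i + P.length)
    (c : ℕ → α)
    (Hgood : ∀ j d, isBad S P H c j d → P[d]? ≠ some (c j))
    (i : ℕ) : ¬ P <+: (substitute S H c).drop i := by
  intro hocc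
  have hch : ∀ d < P.length, (substitute S H c)[i + d]? = P[d]? :=
    (occ_iff P _ i).mp hocc
  set F := H.filter (fun j => i ≤ j ∧ j < i + P.length) with hF
  rcases F.eq_empty_or_nonempty with hFe | hFne
  · -- no substituted position in the window: `S` itself matches at `i`
    have hSocc : P <+: S.drop i := by
      rw [occ_iff]
      intro d hd
      have hmem : i + d ∉ H := by
        intro hmem
        have : i + d ∈ F := by
          rw [hF, Finset.mem_filter]
          exact ⟨hmem, Nat.le_add_right _ _, by omega⟩
        rw [hFe] at this; exact absurd this (Finset.notMem_empty _)
      have hthis := hch d hd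
      have hfun : (fun a : α => if i + d ∈ H then c (i + d) else a) = id := by
        funext a; rw [if_neg hmem]; rfl
      rw [substitute_getElem?, hfun, Option.map_id] at hthis
      exact hthis
    obtain ⟨j, hjH, hj1, hj2⟩ := Hhit i hSocc
    have : j ∈ F := by rw [hF, Finset.mem_filter]; exact ⟨hjH, hj1, hj2⟩
    rw [hFe] at this; exact absurd this (Finset.notMem_empty _)
  · -- take the largest substituted position in the window
    set j := F.max' hFne with hj
    have hjF : j ∈ F := F.max'_mem hFne
    rw [hF, Finset.mem_filter] at hjF
    obtain ⟨hjH, hij, hjik⟩ := hjF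
    set d := j - i with hd
    have hdk : d < P.length := by omega
    have hji : j - d = i := by omega
    have hbad : isBad S P H c j d := by
      refine ⟨hdk, by omega, ?_, ?_⟩
      · intro x hxH hx1 hx2
        rw [hji] at hx1 hx2
        have : x ∈ F := by rw [hF, Finset.mem_filter]; exact ⟨hxH, hx1, hx2⟩
        exact F.le_max' x this
      · intro x hx1 hx2 _
        rw [hji] at hx1 hx2
        have h' := hch (x - i) (by omega)
        rw [show i + (x - i) = x from by omega] at h'
        rw [hji]
        exact h'
    have hTj : (substitute S H c)[j]? = P[d]? := by
      have := hch d hdk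
      rwa [show i + d = j by omega] at this
    have hjlt : j < S.length := by
      have hsome : P[d]? = some P[d] := List.getElem?_eq_getElem hdk
      rw [hsome] at hTj
      by_contra hge
      rw [substitute_getElem?, List.getElem?_eq_none (by omega)] at hTj
      simp at hTj
    have hTj' : (substitute S H c)[j]? = some (c j) := by
      rw [substitute_getElem?, List.getElem?_eq_getElem hjlt]
      simp [hjH]
    exact Hgood j d hbad (by rw [← hTj, hTj'])

end MinElim

open MinElim in
/-- Over an alphabet with more than two characters, the minimum size of an eliminating
set for `P` in `S` equals the minimum size of a set of positions hitting every
`P`-match interval `[i, i + |P| - 1]` of `S`. -/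
theorem min_eliminating_eq_min_hitting
    {α : Type*} [Fintype α] (h : 2 < Fintype.card α)
    (S P : List α) (hP : 1 ≤ P.length) :
    sInf {n : ℕ | ∃ (E : Finset ℕ) (c : ℕ → α), E.card = n ∧
        ∀ i, ¬ P <+: (substitute S E c).drop i}
      = sInf {n : ℕ | ∃ H : Finset ℕ, H.card = n ∧
        ∀ i, P <+: S.drop i → ∃ j ∈ H, i ≤ j ∧ j < i + P.length} := by
  classical
  have hne : Nonempty α := Fintype.card_pos_iff.mp (by omega)
  obtain ⟨a0⟩ := hne
  have hlt : ∀ i, P <+: S.drop i → i < S.length := by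
    intro i hi
    have h0 := (occ_iff P S i).mp hi 0 hP
    rw [Nat.add_zero, List.getElem?_eq_getElem hP] at h0
    by_contra hge
    rw [List.getElem?_eq_none (by omega)] at h0
    simp at h0
  -- the hitting-set side is nonempty
  have hBne : Set.Nonempty {n : ℕ | ∃ H : Finset ℕ, H.card = n ∧
      ∀ i, P <+: S.drop i → ∃ j ∈ H, i ≤ j ∧ j < i + P.length} := by
    refine ⟨(Finset.range S.length).card, Finset.range S.length, rfl, ?_⟩
    intro i hi
    exact ⟨i, Finset.mem_range.mpr (hlt i hi), le_refl i, by omega⟩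
  apply le_antisymm
  · refine le_csInf hBne ?_
    rintro n ⟨H, rfl, hHit⟩
    exact Nat.sInf_le ⟨H, cfun S P H a0, rfl,
      no_occ S P H hHit (cfun S P H a0) (cfun_good h S P H a0)⟩
  · refine le_csInf ?_ ?_
    · -- the eliminating side is nonempty
      obtain ⟨z, hz⟩ := Fintype.exists_ne_of_one_lt_card (by omega) (P[0]'hP)
      refine ⟨(Finset.range S.length).card, Finset.range S.length, fun _ => z, rfl, ?_⟩
      intro i hocc
      have h0 := (occ_iff P _ i).mp hocc 0 hP
      rw [Nat.add_zero, List.getElem?_eq_getElem hP, substitute_getElem?] at h0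
      by_cases hi : i < S.length
      · rw [List.getElem?_eq_getElem hi] at h0
        simp only [Finset.mem_range, hi, if_true, Option.map_some] at h0
        exact hz (Option.some_inj.mp h0)
      · rw [List.getElem?_eq_none (by omega)] at h0
        simp at h0
    · rintro n ⟨E, c, rfl, hno⟩
      refine Nat.sInf_le ⟨E, rfl, ?_⟩
      intro i hi
      by_contra hcon
      push_neg at hcon
      apply hno i
      rw [occ_iff]
      intro d hd
      have hmem : i + d ∉ E := by
        intro hmem
        exact absurd (hcon (i + d) hmem (Nat.le_add_right _ _)) (by omega)
      have hfun : (fun a : α => if i + d ∈ E then c (i + d) else a) = id := by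
        funext a; rw [if_neg hmem]; rfl
      rw [substitute_getElem?, hfun, Option.map_id]
      exact (occ_iff P S i).mp hi d hd
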